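/- Let n ≥ 1, let e₁, …, e_n : ℝ^n → ℝ be the coordinate projections, and let r, s ∈ ℝ with s ≠ −r. For a function f : ℝ^n → ℝ write Φ(f) for the function x ↦ r·max(f(x), 0) + s·max(−f(x), 0). Then for every continuous positively homogeneous function h : ℝ^n → ℝ (i.e., h(t•x) = t·h(x) for all t ≥ 0 and x ∈ ℝ^n) and every ε > 0, there is a function u in the linear span of { Φ(f) : f ∈ span{ e₁⁺, e₁⁻, …, e_n⁺, e_n⁻ } } such that |h(x) − u(x)| ≤ ε for all x ∈ [−1, 1]^n. -/

import Mathlib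

open Finset

set_option maxHeartbeats 1000000 in
lemma pl_approx (R ε : ℝ) (hR : 0 < R) (hε : 0 < ε) (ψ : ℝ → ℝ) (hψ : Continuous ψ) :
    ∃ (N : ℕ) (c : ℕ → ℝ) (t : ℕ → ℝ),
      ∀ x ∈ Set.Icc (-R) R,
        |ψ x - (ψ (-R) + ∑ j ∈ Finset.range N,
          c j * (max (x - t j) 0 - max (x - t (j+1)) 0))| ≤ ε := by
  -- uniform continuity on the compact interval
  have huc : UniformContinuousOn ψ (Set.Icc (-R) R) :=
    isCompact_Icc.uniformContinuousOn_of_continuous hψ.continuousOn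
  rw [Metric.uniformContinuousOn_iff] at huc
  obtain ⟨δ, hδ, hucd⟩ := huc (ε/2) (by positivity)
  obtain ⟨N, hN⟩ := exists_nat_gt (2*R/δ)
  have hNpos : 0 < (N:ℝ) := lt_trans (by positivity) hN
  have hN1 : 1 ≤ N := by exact_mod_cast hNpos
  set δ' : ℝ := 2*R/N with hδ'def
  have hδ'pos : 0 < δ' := by positivity
  have hNδ : (N:ℝ) * δ' = 2*R := by rw [hδ'def]; field_simp
  have hδ'lt : δ' < δ := by
    rw [hδ'def, div_lt_iff₀ hNpos]
    calc 2*R = (2*R/δ) * δ := by field_simp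
    _ < N * δ := mul_lt_mul_of_pos_right hN hδ
    _ = δ * N := mul_comm _ _
  set t : ℕ → ℝ := fun j => -R + j * δ' with ht
  set c : ℕ → ℝ := fun j => (ψ (t (j+1)) - ψ (t j)) / δ' with hc
  refine ⟨N, c, t, ?_⟩
  rintro x ⟨hx1, hx2⟩
  have hxR : 0 ≤ x + R := by linarith
  set k : ℕ := min ⌊(x+R)/δ'⌋₊ (N-1) with hk
  have hkN1 : k ≤ N - 1 := min_le_right _ _
  have hkN : k < N := lt_of_le_of_lt hkN1 (Nat.sub_lt (lt_of_lt_of_le Nat.one_pos hN1) Nat.one_pos)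
  have hk1 : (k:ℝ) * δ' ≤ x + R := by
    have h1 : (k:ℝ) ≤ ⌊(x+R)/δ'⌋₊ := by exact_mod_cast min_le_left _ _
    have h2 : (⌊(x+R)/δ'⌋₊ : ℝ) ≤ (x+R)/δ' := Nat.floor_le (by positivity)
    calc (k:ℝ) * δ' ≤ ((x+R)/δ') * δ' := by nlinarith
    _ = x + R := by field_simp
  have hk2 : x + R ≤ ((k:ℝ)+1) * δ' := by
    rcases le_or_gt ⌊(x+R)/δ'⌋₊ (N-1) with hcase | hcase
    · have hkeq : k = ⌊(x+R)/δ'⌋₊ := min_eq_left hcase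
      have h3 := Nat.lt_floor_add_one ((x+R)/δ')
      rw [← hkeq] at h3
      have h4 : (x+R)/δ' < (k:ℝ) + 1 := by exact_mod_cast h3
      nlinarith [(div_lt_iff₀ hδ'pos).mp h4]
    · have hkeq : k = N - 1 := min_eq_right (le_of_lt hcase)
      have h5 : (k:ℝ) + 1 = N := by
        rw [hkeq]; exact_mod_cast Nat.sub_add_cancel hN1
      rw [h5]; linarith
  -- value of the sum
  have hterm_lt : ∀ j < k, c j * (max (x - t j) 0 - max (x - t (j+1)) 0)
      = ψ (t (j+1)) - ψ (t j) := by
    intro j hj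
    have hjk : (j:ℝ) + 1 ≤ (k:ℝ) := by exact_mod_cast hj
    have hj1 : ((j:ℝ)+1) * δ' ≤ (k:ℝ) * δ' := by nlinarith
    have hjj : (j:ℝ) * δ' ≤ ((j:ℝ)+1) * δ' := by nlinarith
    have h1 : 0 ≤ x - t (j+1) := by
      simp only [ht]; push_cast; linarith
    have h2 : 0 ≤ x - t j := by
      simp only [ht]; push_cast; linarith
    rw [max_eq_left h1, max_eq_left h2]
    have h6 : x - t j - (x - t (j+1)) = δ' := by simp only [ht]; push_cast; ring
    rw [h6, hc]
    field_simp
  have hterm_gt : ∀ j, k < j → c j * (max (x - t j) 0 - max (x - t (j+1)) 0) = 0 := by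
    intro j hj
    have hjk : (k:ℝ) + 1 ≤ (j:ℝ) := by exact_mod_cast hj
    have hj1 : ((k:ℝ)+1) * δ' ≤ (j:ℝ) * δ' := by nlinarith
    have hjj : (j:ℝ) * δ' ≤ ((j:ℝ)+1) * δ' := by nlinarith
    have h1 : x - t j ≤ 0 := by simp only [ht]; push_cast; linarith
    have h2 : x - t (j+1) ≤ 0 := by simp only [ht]; push_cast; linarith
    rw [max_eq_right h1, max_eq_right h2]
    ring
  have hxtk1 : 0 ≤ x - t k := by simp only [ht]; linarith
  have hxtk2 : x - t k ≤ δ' := by simp only [ht]; linarith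
  have hterm_eq : c k * (max (x - t k) 0 - max (x - t (k+1)) 0) = c k * (x - t k) := by
    have h1 : x - t (k+1) ≤ 0 := by simp only [ht]; push_cast; linarith
    rw [max_eq_left hxtk1, max_eq_right h1]
    ring
  have hsum : ∑ j ∈ Finset.range N, c j * (max (x - t j) 0 - max (x - t (j+1)) 0)
      = (ψ (t k) - ψ (t 0)) + c k * (x - t k) := by
    rw [← Finset.sum_range_add_sum_Ico _ (Nat.succ_le_of_lt hkN)]
    rw [Finset.sum_range_succ]
    rw [Finset.sum_congr rfl (fun j hj => hterm_lt j (Finset.mem_range.mp hj))]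
    rw [Finset.sum_range_sub (fun j => ψ (t j)), hterm_eq]
    have hz : ∑ j ∈ Finset.Ico (k+1) N, c j * (max (x - t j) 0 - max (x - t (j+1)) 0) = 0 := by
      apply Finset.sum_eq_zero
      intro j hj
      exact hterm_gt j (Nat.lt_of_succ_le (Finset.mem_Ico.mp hj).1)
    rw [hz]; ring
  have ht0 : t 0 = -R := by simp [ht]
  rw [hsum, ht0]
  -- error bound
  have hkr : (k:ℝ) + 1 ≤ (N:ℝ) := by exact_mod_cast hkN
  have hkk : ((k:ℝ)+1) * δ' ≤ (N:ℝ) * δ' := by nlinarith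
  have hkd : 0 ≤ (k:ℝ) * δ' := by positivity
  have hkd1 : 0 ≤ ((k:ℝ)+1) * δ' := by positivity
  have htkmem : t k ∈ Set.Icc (-R) R := by
    constructor
    · simp only [ht]; linarith
    · simp only [ht]; linarith
  have htk1mem : t (k+1) ∈ Set.Icc (-R) R := by
    constructor
    · simp only [ht]; push_cast; linarith
    · simp only [ht]; push_cast; linarith
  have hxmem : x ∈ Set.Icc (-R) R := ⟨hx1, hx2⟩
  have hd1 : dist (ψ x) (ψ (t k)) < ε/2 := by
    apply hucd x hxmem (t k) htkmem
    rw [Real.dist_eq, abs_of_nonneg hxtk1]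
    linarith
  have hd2 : dist (ψ (t (k+1))) (ψ (t k)) < ε/2 := by
    apply hucd _ htk1mem _ htkmem
    rw [Real.dist_eq]
    have h7 : t (k+1) - t k = δ' := by simp only [ht]; push_cast; ring
    rw [h7, abs_of_pos hδ'pos]
    exact hδ'lt
  rw [Real.dist_eq] at hd1 hd2
  have hck : |c k| ≤ (ε/2) / δ' := by
    rw [hc, abs_div, abs_of_pos hδ'pos]
    exact div_le_div_of_nonneg_right (le_of_lt hd2) hδ'pos.le
  have hbound : |c k * (x - t k)| ≤ ε/2 := by
    rw [abs_mul]
    calc |c k| * |x - t k| ≤ ((ε/2)/δ') * δ' := by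
          apply mul_le_mul hck _ (abs_nonneg _) (by positivity)
          rw [abs_of_nonneg hxtk1]; exact hxtk2
    _ = ε/2 := by field_simp
  calc |ψ x - (ψ (-R) + (ψ (t k) - ψ (-R) + c k * (x - t k)))|
      = |(ψ x - ψ (t k)) - c k * (x - t k)| := by ring_nf
    _ ≤ |ψ x - ψ (t k)| + |c k * (x - t k)| := abs_sub _ _
    _ ≤ ε/2 + ε/2 := add_le_add (le_of_lt hd1) hbound
    _ = ε := by ring
open Finset

section aux

variable {n : ℕ} {r s : ℝ} {Φ : ((Fin n → ℝ) → ℝ) → ((Fin n → ℝ) → ℝ)}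

/-- the generating set of coordinate ReLUs -/
def genSet (n : ℕ) : Set ((Fin n → ℝ) → ℝ) :=
  {f : (Fin n → ℝ) → ℝ | ∃ i : Fin n, f = fun x => max (x i) 0} ∪
  {f : (Fin n → ℝ) → ℝ | ∃ i : Fin n, f = fun x => max (-(x i)) 0}

def Vsp (n : ℕ) : Submodule ℝ ((Fin n → ℝ) → ℝ) := Submodule.span ℝ (genSet n)

def Wsp (n : ℕ) (Φ : ((Fin n → ℝ) → ℝ) → ((Fin n → ℝ) → ℝ)) :
    Submodule ℝ ((Fin n → ℝ) → ℝ) := Submodule.span ℝ (Φ '' ↑(Vsp n))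

lemma abs_eq_max_add (a : ℝ) : |a| = max a 0 + max (-a) 0 := by
  rcases le_total a 0 with h | h
  · rw [abs_of_nonpos h, max_eq_right h, max_eq_left (by linarith)]; ring
  · rw [abs_of_nonneg h, max_eq_left h, max_eq_right (by linarith)]; ring

lemma L_abs (hrs : s ≠ -r)
    (hΦ : ∀ f : (Fin n → ℝ) → ℝ, ∀ x : Fin n → ℝ,
      Φ f x = r * max (f x) 0 + s * max (-(f x)) 0)
    {f : (Fin n → ℝ) → ℝ} (hf : f ∈ Vsp n) :
    (fun x => |f x|) ∈ Wsp n Φ := by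
  have hrs' : r + s ≠ 0 := fun hc => hrs (by linarith)
  have h1 : Φ f ∈ Wsp n Φ := Submodule.subset_span ⟨f, hf, rfl⟩
  have h2 : Φ (-f) ∈ Wsp n Φ := Submodule.subset_span ⟨-f, Submodule.neg_mem _ hf, rfl⟩
  have key : (fun x => |f x|) = (r+s)⁻¹ • (Φ f + Φ (-f)) := by
    funext x
    simp only [Pi.smul_apply, Pi.add_apply, smul_eq_mul, hΦ f x, hΦ (-f) x, Pi.neg_apply, neg_neg]
    rw [abs_eq_max_add, eq_inv_mul_iff_mul_eq₀ hrs']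
    ring
  rw [key]
  exact Submodule.smul_mem _ _ (Submodule.add_mem _ h1 h2)

lemma L_VleW (hrs : s ≠ -r)
    (hΦ : ∀ f : (Fin n → ℝ) → ℝ, ∀ x : Fin n → ℝ,
      Φ f x = r * max (f x) 0 + s * max (-(f x)) 0) :
    Vsp n ≤ Wsp n Φ := by
  rw [Vsp, Submodule.span_le]
  rintro g (⟨i, rfl⟩ | ⟨i, rfl⟩)
  · have : (fun x : Fin n → ℝ => max (x i) 0) = fun x => |max (x i) 0| := by
      funext x; rw [abs_of_nonneg (le_max_right _ _)]
    rw [this]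
    exact L_abs hrs hΦ (Submodule.subset_span (Or.inl ⟨i, rfl⟩))
  · have : (fun x : Fin n → ℝ => max (-(x i)) 0) = fun x => |max (-(x i)) 0| := by
      funext x; rw [abs_of_nonneg (le_max_right _ _)]
    rw [this]
    exact L_abs hrs hΦ (Submodule.subset_span (Or.inr ⟨i, rfl⟩))

lemma L_pos (hrs : s ≠ -r)
    (hΦ : ∀ f : (Fin n → ℝ) → ℝ, ∀ x : Fin n → ℝ,
      Φ f x = r * max (f x) 0 + s * max (-(f x)) 0)
    {f : (Fin n → ℝ) → ℝ} (hf : f ∈ Vsp n) :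
    (fun x => max (f x) 0) ∈ Wsp n Φ := by
  have key : (fun x => max (f x) 0) = (2⁻¹ : ℝ) • (f + fun x => |f x|) := by
    funext x
    simp only [Pi.smul_apply, Pi.add_apply, smul_eq_mul]
    rcases le_total (f x) 0 with h | h
    · rw [max_eq_right h, abs_of_nonpos h]; ring
    · rw [max_eq_left h, abs_of_nonneg h]; ring
  rw [key]
  exact Submodule.smul_mem _ _ (Submodule.add_mem _ (L_VleW hrs hΦ hf) (L_abs hrs hΦ hf))

lemma relu_combo (a β t : ℝ) : (a+β) * max t 0 + (β-a) * max (-t) 0 = a*t + β*|t| := by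
  rcases le_total t 0 with h | h
  · rw [max_eq_right h, max_eq_left (by linarith), abs_of_nonpos h]; ring
  · rw [max_eq_left h, max_eq_right (by linarith), abs_of_nonneg h]; ring

lemma L_affine (a : Fin n → ℝ) (β : ℝ) :
    (fun x : Fin n → ℝ => (∑ i, a i * x i) + β * ∑ i, |x i|) ∈ Vsp n := by
  have key : (fun x : Fin n → ℝ => (∑ i, a i * x i) + β * ∑ i, |x i|)
      = ∑ i : Fin n, ((a i + β) • (fun x : Fin n → ℝ => max (x i) 0)
          + (β - a i) • (fun x : Fin n → ℝ => max (-(x i)) 0)) := by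
    funext x
    rw [Finset.sum_apply]
    simp only [Pi.add_apply, Pi.smul_apply, smul_eq_mul]
    rw [Finset.mul_sum, ← Finset.sum_add_distrib]
    exact Finset.sum_congr rfl fun i _ => (relu_combo (a i) β (x i)).symm
  rw [key]
  exact Submodule.sum_mem _ fun i _ => Submodule.add_mem _
    (Submodule.smul_mem _ _ (Submodule.subset_span (Or.inl ⟨i, rfl⟩)))
    (Submodule.smul_mem _ _ (Submodule.subset_span (Or.inr ⟨i, rfl⟩)))

lemma L_homW (hΦ : ∀ f : (Fin n → ℝ) → ℝ, ∀ x : Fin n → ℝ,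
      Φ f x = r * max (f x) 0 + s * max (-(f x)) 0)
    {u : (Fin n → ℝ) → ℝ} (hu : u ∈ Wsp n Φ) :
    ∀ t : ℝ, 0 ≤ t → ∀ x : Fin n → ℝ, u (t • x) = t * u x := by
  have hV : ∀ f ∈ Vsp n, ∀ t : ℝ, 0 ≤ t → ∀ x : Fin n → ℝ, f (t • x) = t * f x := by
    intro f hf
    induction hf using Submodule.span_induction with
    | mem g hg =>
      intro t ht x
      rcases hg with ⟨i, rfl⟩ | ⟨i, rfl⟩ <;>
        simp only [Pi.smul_apply, smul_eq_mul, ← mul_neg, mul_max_of_nonneg _ _ ht, mul_zero]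
    | zero => intro t ht x; simp
    | add g₁ g₂ _ _ ih1 ih2 =>
      intro t ht x
      simp only [Pi.add_apply, ih1 t ht x, ih2 t ht x]; ring
    | smul c g _ ih =>
      intro t ht x
      simp only [Pi.smul_apply, smul_eq_mul, ih t ht x]; ring
  induction hu using Submodule.span_induction with
  | mem g hg =>
    obtain ⟨f, hf, rfl⟩ := hg
    intro t ht x
    have e1 : t * f x ⊔ 0 = t * (f x ⊔ 0) := by rw [mul_max_of_nonneg _ _ ht, mul_zero]
    have e2 : t * -f x ⊔ 0 = t * (-f x ⊔ 0) := by rw [mul_max_of_nonneg _ _ ht, mul_zero]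
    rw [hΦ f (t • x), hΦ f x, hV f hf t ht x, ← mul_neg, e1, e2]
    ring
  | zero => intro t ht x; simp
  | add g₁ g₂ _ _ ih1 ih2 =>
    intro t ht x
    simp only [Pi.add_apply, ih1 t ht x, ih2 t ht x]; ring
  | smul c g _ ih =>
    intro t ht x
    simp only [Pi.smul_apply, smul_eq_mul, ih t ht x]; ring

end aux

section gen

variable {n : ℕ} {r s : ℝ} {Φ : ((Fin n → ℝ) → ℝ) → ((Fin n → ℝ) → ℝ)}

lemma L_gen (hrs : s ≠ -r)
    (hΦ : ∀ f : (Fin n → ℝ) → ℝ, ∀ x : Fin n → ℝ,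
      Φ f x = r * max (f x) 0 + s * max (-(f x)) 0)
    (a : Fin n → ℝ) (b : ℝ) {ε : ℝ} (hε : 0 < ε) :
    ∃ u ∈ Wsp n Φ, ∀ x : Fin n → ℝ, (∑ i, |x i|) = 1 →
      |Real.cos ((∑ i, a i * x i) + b) - u x| ≤ ε := by
  set R : ℝ := (∑ i, |a i|) + |b| + 1 with hR
  have hRpos : 0 < R := by positivity
  obtain ⟨N, c, t, hPL⟩ := pl_approx R ε hRpos hε Real.cos Real.continuous_cos
  set v : ℝ → (Fin n → ℝ) → ℝ :=
    fun cc => fun x => (∑ i, a i * x i) + (b - cc) * ∑ i, |x i| with hv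
  have hvV : ∀ cc, v cc ∈ Vsp n := fun cc => L_affine a (b - cc)
  set nrm : (Fin n → ℝ) → ℝ := fun x => ∑ i, |x i| with hnrm
  have hnrmV : nrm ∈ Vsp n := by
    have h0 := L_affine (n := n) 0 1
    have : (fun x : Fin n → ℝ => (∑ i, (0 : Fin n → ℝ) i * x i) + 1 * ∑ i, |x i|) = nrm := by
      funext x; simp [hnrm]
    rwa [this] at h0
  refine ⟨Real.cos (-R) • nrm + ∑ j ∈ Finset.range N,
      c j • ((fun x => max (v (t j) x) 0) - fun x => max (v (t (j+1)) x) 0), ?_, ?_⟩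
  · exact Submodule.add_mem _
      (Submodule.smul_mem _ _ (L_VleW hrs hΦ hnrmV))
      (Submodule.sum_mem _ fun j _ => Submodule.smul_mem _ _
        (Submodule.sub_mem _ (L_pos hrs hΦ (hvV _)) (L_pos hrs hΦ (hvV _))))
  · intro x hx
    have hxi : ∀ i, |x i| ≤ 1 := by
      intro i
      rw [← hx]
      exact Finset.single_le_sum (f := fun j => |x j|) (fun j _ => abs_nonneg _)
        (Finset.mem_univ i)
    have habs : |∑ i, a i * x i| ≤ ∑ i, |a i| := by
      calc |∑ i, a i * x i| ≤ ∑ i, |a i * x i| := Finset.abs_sum_le_sum_abs _ _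
      _ ≤ ∑ i, |a i| := Finset.sum_le_sum fun i _ => by
            rw [abs_mul]; exact mul_le_of_le_one_right (abs_nonneg _) (hxi i)
    have hb1 := abs_le.mp habs
    have hb2 := abs_le.mp (le_refl |b|)
    have hTmem : (∑ i, a i * x i) + b ∈ Set.Icc (-R) R := by
      constructor
      · rw [hR]; linarith [neg_abs_le b]
      · rw [hR]; linarith [le_abs_self b]
    have hPLT := hPL _ hTmem
    have hvx : ∀ cc, v cc x = ((∑ i, a i * x i) + b) - cc := by
      intro cc; simp only [hv]; rw [hx]; ring
    have hux : (Real.cos (-R) • nrm + ∑ j ∈ Finset.range N,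
        c j • ((fun x => max (v (t j) x) 0) - fun x => max (v (t (j+1)) x) 0)) x
        = Real.cos (-R) + ∑ j ∈ Finset.range N,
            c j * (max (((∑ i, a i * x i) + b) - t j) 0
              - max (((∑ i, a i * x i) + b) - t (j+1)) 0) := by
      simp only [Pi.add_apply, Pi.smul_apply, Finset.sum_apply, Pi.sub_apply, smul_eq_mul,
        hvx]
      rw [show nrm x = 1 from hx, mul_one]
    rw [hux]
    exact hPLT
end gen

section sw

variable (n : ℕ)

def Kset (n : ℕ) : Set (Fin n → ℝ) := {x | ∑ i, |x i| = 1}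

lemma Kcompact : IsCompact (Kset n) := by
  have hg : Continuous (fun x : Fin n → ℝ => ∑ i, |x i|) :=
    continuous_finset_sum _ fun i _ => (continuous_apply i).abs
  have hclosed : IsClosed (Kset n) := by
    have : Kset n = (fun x : Fin n → ℝ => ∑ i, |x i|) ⁻¹' {1} := rfl
    rw [this]
    exact IsClosed.preimage hg isClosed_singleton
  have hsub : Kset n ⊆ Metric.closedBall 0 1 := by
    intro x hx
    rw [Metric.mem_closedBall, dist_zero_right]
    rw [pi_norm_le_iff_of_nonneg zero_le_one]
    intro i
    rw [Real.norm_eq_abs, ← hx]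
    exact Finset.single_le_sum (f := fun j => |x j|) (fun j _ => abs_nonneg _) (Finset.mem_univ i)
  exact (isCompact_closedBall 0 1).of_isClosed_subset hclosed hsub

noncomputable def cosFun (a : Fin n → ℝ) (b : ℝ) : C(↥(Kset n), ℝ) :=
  ⟨fun x => Real.cos ((∑ i, a i * (x : Fin n → ℝ) i) + b),
   Real.continuous_cos.comp ((continuous_finset_sum Finset.univ fun i _ =>
     continuous_const.mul ((continuous_apply i).comp continuous_subtype_val)).add
     continuous_const)⟩

def Gset : Set C(↥(Kset n), ℝ) := Set.range (fun p : (Fin n → ℝ) × ℝ => cosFun n p.1 p.2)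

noncomputable def Msub : Submodule ℝ C(↥(Kset n), ℝ) := Submodule.span ℝ (Gset n)

lemma one_mem_Msub : (1 : C(↥(Kset n), ℝ)) ∈ Msub n := by
  have : cosFun n 0 0 = 1 := by
    ext x
    simp [cosFun]
  rw [← this]
  exact Submodule.subset_span ⟨(0, 0), rfl⟩

lemma cos_mul_cos (a a' : Fin n → ℝ) (b b' : ℝ) :
    cosFun n a b * cosFun n a' b'
      = (2⁻¹ : ℝ) • cosFun n (a + a') (b + b') + (2⁻¹ : ℝ) • cosFun n (a - a') (b - b') := by
  ext x
  simp only [ContinuousMap.mul_apply, ContinuousMap.add_apply, ContinuousMap.smul_apply,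
    cosFun, ContinuousMap.coe_mk, smul_eq_mul]
  have e1 : ∑ i, (a + a') i * (x : Fin n → ℝ) i
      = (∑ i, a i * (x : Fin n → ℝ) i) + ∑ i, a' i * (x : Fin n → ℝ) i := by
    rw [← Finset.sum_add_distrib]
    exact Finset.sum_congr rfl fun i _ => by simp [Pi.add_apply]; ring
  have e2 : ∑ i, (a - a') i * (x : Fin n → ℝ) i
      = (∑ i, a i * (x : Fin n → ℝ) i) - ∑ i, a' i * (x : Fin n → ℝ) i := by
    rw [← Finset.sum_sub_distrib]
    exact Finset.sum_congr rfl fun i _ => by simp [Pi.sub_apply]; ring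
  rw [e1, e2]
  have key : ∀ U V : ℝ, Real.cos U * Real.cos V
      = 2⁻¹ * Real.cos (U + V) + 2⁻¹ * Real.cos (U - V) := by
    intro U V; rw [Real.cos_add, Real.cos_sub]; ring
  rw [show ((∑ i, a i * (x : Fin n → ℝ) i) + ∑ i, a' i * (x : Fin n → ℝ) i) + (b + b')
      = ((∑ i, a i * (x : Fin n → ℝ) i) + b) + ((∑ i, a' i * (x : Fin n → ℝ) i) + b') from by
        ring,
    show ((∑ i, a i * (x : Fin n → ℝ) i) - ∑ i, a' i * (x : Fin n → ℝ) i) + (b - b')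
      = ((∑ i, a i * (x : Fin n → ℝ) i) + b) - ((∑ i, a' i * (x : Fin n → ℝ) i) + b') from by
        ring,
    key]

lemma mul_mem_Msub : ∀ p ∈ Msub n, ∀ q ∈ Msub n, p * q ∈ Msub n := by
  intro p hp
  induction hp using Submodule.span_induction with
  | mem g hg =>
    intro q hq
    induction hq using Submodule.span_induction with
    | mem g' hg' =>
      obtain ⟨⟨a, b⟩, rfl⟩ := hg
      obtain ⟨⟨a', b'⟩, rfl⟩ := hg'
      rw [cos_mul_cos]
      exact Submodule.add_mem _
        (Submodule.smul_mem _ _ (Submodule.subset_span ⟨(a + a', b + b'), rfl⟩))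
        (Submodule.smul_mem _ _ (Submodule.subset_span ⟨(a - a', b - b'), rfl⟩))
    | zero => rw [mul_zero]; exact Submodule.zero_mem _
    | add q1 q2 hq1 hq2 ih1 ih2 => rw [mul_add]; exact Submodule.add_mem _ ih1 ih2
    | smul c q hq ih => rw [mul_smul_comm]; exact Submodule.smul_mem _ _ ih
  | zero => intro q hq; rw [zero_mul]; exact Submodule.zero_mem _
  | add p1 p2 hp1 hp2 ih1 ih2 =>
    intro q hq; rw [add_mul]; exact Submodule.add_mem _ (ih1 q hq) (ih2 q hq)
  | smul c p hp ih =>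
    intro q hq; rw [smul_mul_assoc]; exact Submodule.smul_mem _ _ (ih q hq)

noncomputable def Asub : Subalgebra ℝ C(↥(Kset n), ℝ) :=
  (Msub n).toSubalgebra (one_mem_Msub n) (fun p q hp hq => mul_mem_Msub n p hp q hq)

lemma Asep : (Asub n).SeparatesPoints := by
  intro x y hxy
  have hxy1 : (x : Fin n → ℝ) ≠ (y : Fin n → ℝ) := fun hc => hxy (Subtype.ext hc)
  obtain ⟨i, hi⟩ := Function.ne_iff.mp hxy1
  refine ⟨(cosFun n (Pi.single i 1) (Real.pi / 2) : C(↥(Kset n), ℝ)),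
    ⟨cosFun n (Pi.single i 1) (Real.pi / 2),
      Submodule.subset_span ⟨(Pi.single i 1, Real.pi / 2), rfl⟩, rfl⟩, ?_⟩
  have heval : ∀ z : ↥(Kset n), (cosFun n (Pi.single i 1) (Real.pi / 2)) z
      = -Real.sin ((z : Fin n → ℝ) i) := by
    intro z
    have hsum : ∑ j, (Pi.single i 1 : Fin n → ℝ) j * (z : Fin n → ℝ) j = (z : Fin n → ℝ) i := by
      rw [Finset.sum_eq_single i]
      · simp
      · intro j _ hj
        rw [Pi.single_eq_of_ne hj, zero_mul]
      · intro hmem; exact absurd (Finset.mem_univ i) hmem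
    show Real.cos _ = _
    rw [hsum, Real.cos_add_pi_div_two]
  have hmem : ∀ z : ↥(Kset n), (z : Fin n → ℝ) i ∈ Set.Icc (-(Real.pi/2)) (Real.pi/2) := by
    intro z
    have hz1 : |(z : Fin n → ℝ) i| ≤ 1 := by
      rw [← z.2]
      exact Finset.single_le_sum (f := fun j => |(z : Fin n → ℝ) j|)
        (fun j _ => abs_nonneg _) (Finset.mem_univ i)
    have h12 : (1:ℝ) ≤ Real.pi / 2 := by linarith [Real.two_le_pi]
    obtain ⟨h1, h2⟩ := abs_le.mp hz1
    exact ⟨by linarith, by linarith⟩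
  simp only [heval]
  intro hc
  exact hi (Real.injOn_sin (hmem x) (hmem y) (neg_injective hc))

end sw


/-- With `e₁, …, e_n` the coordinate projections on `ℝⁿ` and
`Φ(f)(x) = r·(f x)⁺ + s·(f x)⁻` (`s ≠ -r`), every continuous positively homogeneous
`h : ℝⁿ → ℝ` can be uniformly approximated on `[-1,1]ⁿ` by elements of
`span Φ(span {e₁⁺, e₁⁻, …, e_n⁺, e_n⁻})`. -/
theorem stmt_12 (n : ℕ) (hn : 1 ≤ n) (r s : ℝ) (hrs : s ≠ -r)
    (Φ : ((Fin n → ℝ) → ℝ) → ((Fin n → ℝ) → ℝ))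
    (hΦ : ∀ f : (Fin n → ℝ) → ℝ, ∀ x : Fin n → ℝ,
      Φ f x = r * max (f x) 0 + s * max (-(f x)) 0)
    (h : (Fin n → ℝ) → ℝ) (hcont : Continuous h)
    (hhom : ∀ t : ℝ, 0 ≤ t → ∀ x : Fin n → ℝ, h (t • x) = t * h x)
    (ε : ℝ) (hε : 0 < ε) :
    ∃ u ∈ Submodule.span ℝ (Φ '' ↑(Submodule.span ℝ
        ({f : (Fin n → ℝ) → ℝ | ∃ i : Fin n, f = fun x => max (x i) 0} ∪
         {f : (Fin n → ℝ) → ℝ | ∃ i : Fin n, f = fun x => max (-(x i)) 0}))),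
      ∀ x : Fin n → ℝ, (∀ i, |x i| ≤ 1) → |h x - u x| ≤ ε := by
  classical
  haveI : CompactSpace ↥(Kset n) := isCompact_iff_compactSpace.mp (Kcompact n)
  show ∃ u ∈ Wsp n Φ, ∀ x : Fin n → ℝ, (∀ i, |x i| ≤ 1) → |h x - u x| ≤ ε
  have hnpos : (0:ℝ) < n := by exact_mod_cast hn
  set ε₂ := ε / n with hε₂
  have hε₂pos : 0 < ε₂ := by positivity
  have hKcont : Continuous (fun x : ↥(Kset n) => h (x : Fin n → ℝ)) :=
    hcont.comp continuous_subtype_val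
  obtain ⟨g, hg⟩ := ContinuousMap.exists_mem_subalgebra_near_continuous_of_separatesPoints
    (Asub n) (Asep n) _ hKcont (ε₂/2) (by positivity)
  have hgM : (g : C(↥(Kset n), ℝ)) ∈ Msub n := g.2
  have Dspan : ∀ p : C(↥(Kset n), ℝ), p ∈ Msub n → ∀ η : ℝ, 0 < η →
      ∃ u ∈ Wsp n Φ, ∀ x : ↥(Kset n), |p x - u (x : Fin n → ℝ)| ≤ η := by
    intro p hp
    induction hp using Submodule.span_induction with
    | mem q hq =>
      obtain ⟨⟨a, b⟩, rfl⟩ := hq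
      intro η hη
      obtain ⟨u, huW, hu⟩ := L_gen hrs hΦ a b hη
      exact ⟨u, huW, fun x => hu (x : Fin n → ℝ) x.2⟩
    | zero =>
      intro η hη
      exact ⟨0, Submodule.zero_mem _, fun x => by simp; linarith⟩
    | add p1 p2 hp1 hp2 ih1 ih2 =>
      intro η hη
      obtain ⟨u1, hu1W, hu1⟩ := ih1 (η/2) (by positivity)
      obtain ⟨u2, hu2W, hu2⟩ := ih2 (η/2) (by positivity)
      refine ⟨u1 + u2, Submodule.add_mem _ hu1W hu2W, fun x => ?_⟩
      calc |(p1 + p2) x - (u1 + u2) (x : Fin n → ℝ)|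
          = |(p1 x - u1 (x : Fin n → ℝ)) + (p2 x - u2 (x : Fin n → ℝ))| := by
            simp only [ContinuousMap.add_apply, Pi.add_apply]; ring_nf
        _ ≤ |p1 x - u1 (x : Fin n → ℝ)| + |p2 x - u2 (x : Fin n → ℝ)| := abs_add_le _ _
        _ ≤ η/2 + η/2 := add_le_add (hu1 x) (hu2 x)
        _ = η := by ring
    | smul c p hp ih =>
      intro η hη
      rcases eq_or_ne c 0 with rfl | hc
      · refine ⟨0, Submodule.zero_mem _, fun x => ?_⟩
        simp
        linarith
      · obtain ⟨u, huW, hu⟩ := ih (η/|c|) (by positivity)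
        refine ⟨c • u, Submodule.smul_mem _ _ huW, fun x => ?_⟩
        calc |(c • p) x - (c • u) (x : Fin n → ℝ)| = |c| * |p x - u (x : Fin n → ℝ)| := by
              simp only [ContinuousMap.smul_apply, Pi.smul_apply, smul_eq_mul]
              rw [← mul_sub, abs_mul]
          _ ≤ |c| * (η/|c|) := mul_le_mul_of_nonneg_left (hu x) (abs_nonneg c)
          _ = η := by field_simp
  obtain ⟨u, huW, hu⟩ := Dspan _ hgM (ε₂/2) (by positivity)
  refine ⟨u, huW, ?_⟩
  have hKapprox : ∀ z : Fin n → ℝ, ∀ hz : z ∈ Kset n, |h z - u z| ≤ ε₂ := by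
    intro z hz
    have h1 := hg ⟨z, hz⟩
    have h2 := hu ⟨z, hz⟩
    rw [Real.norm_eq_abs] at h1
    calc |h z - u z|
        = |((g : C(↥(Kset n), ℝ)) ⟨z, hz⟩ - h z) * (-1) + ((g : C(↥(Kset n), ℝ)) ⟨z, hz⟩ - u z)| := by
          ring_nf
      _ ≤ |((g : C(↥(Kset n), ℝ)) ⟨z, hz⟩ - h z) * (-1)| + |(g : C(↥(Kset n), ℝ)) ⟨z, hz⟩ - u z| :=
          abs_add_le _ _
      _ ≤ ε₂/2 + ε₂/2 := by
          rw [abs_mul, abs_neg, abs_one, mul_one]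
          exact add_le_add (le_of_lt h1) h2
      _ = ε₂ := by ring
  intro x hx
  rcases eq_or_ne (∑ i, |x i|) 0 with hS | hS
  · have hx0 : x = 0 := by
      funext i
      have hiz := (Finset.sum_eq_zero_iff_of_nonneg (fun j _ => abs_nonneg (x j))).mp hS
        i (Finset.mem_univ i)
      exact abs_eq_zero.mp hiz
    subst hx0
    have hh0 : h 0 = 0 := by
      have h00 := hhom 0 le_rfl 0
      rw [zero_smul] at h00
      linarith [h00]
    have hu0 : u 0 = 0 := by
      have h00 := L_homW hΦ huW 0 le_rfl 0
      rw [zero_smul] at h00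
      linarith [h00]
    rw [hh0, hu0]
    simp
    positivity
  · set S := ∑ i, |x i| with hSdef
    have hSnn : 0 ≤ S := Finset.sum_nonneg fun i _ => abs_nonneg _
    have hSpos : 0 < S := lt_of_le_of_ne hSnn (Ne.symm hS)
    have hSle : S ≤ n := by
      calc S ≤ ∑ _i : Fin n, (1:ℝ) := Finset.sum_le_sum fun i _ => hx i
        _ = n := by simp
    set y := S⁻¹ • x with hy
    have hyK : y ∈ Kset n := by
      show ∑ i, |y i| = 1
      have : ∀ i, |y i| = S⁻¹ * |x i| := by
        intro i
        rw [hy, Pi.smul_apply, smul_eq_mul, abs_mul, abs_of_pos (inv_pos.mpr hSpos)]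
      rw [Finset.sum_congr rfl fun i _ => this i, ← Finset.mul_sum, ← hSdef,
        inv_mul_cancel₀ hSpos.ne']
    have hxy : x = S • y := by
      rw [hy, smul_smul, mul_inv_cancel₀ hSpos.ne', one_smul]
    have hyapp := hKapprox y hyK
    calc |h x - u x| = |h (S • y) - u (S • y)| := by rw [← hxy]
      _ = |S * h y - S * u y| := by rw [hhom S hSpos.le y, L_homW hΦ huW S hSpos.le y]
      _ = S * |h y - u y| := by rw [← mul_sub, abs_mul, abs_of_pos hSpos]
      _ ≤ S * ε₂ := mul_le_mul_of_nonneg_left hyapp hSpos.le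
      _ ≤ n * ε₂ := mul_le_mul_of_nonneg_right hSle hε₂pos.le
      _ = ε := by rw [hε₂]; field_simp
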